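/- arXiv:1605.03044 — 3 statements merged into one kernel-verified Lean document; each statement's English description precedes it below -/
import Mathlib

section
/- Let ψ be a 2-cocycle on SV = SV[Γ,s] and let f be the linear map associated to ψ by the recursive formulas below; set φ = ψ − ψ_f. Then φ(L_{α,i}, L_{β,j}) = 0 for all α, β ∈ Γ and all i, j ∈ ℤ_{≥0}. -/
noncomputable section

namespace SVSuper

variable (Γ : AddSubgroup ℂ) (s : ℂ)

/-- Basis index type of `SV[Γ,s]`: `Sum.inl (α, i)` stands for `L_{α,i}` (`α ∈ Γ`),
`Sum.inr (μ, j)` stands for `G_{μ,j}` (`μ ∈ s + Γ`). -/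
abbrev Idx : Type := (Γ × ℕ) ⊕ ({μ : ℂ // μ - s ∈ Γ} × ℕ)

/-- The underlying vector space of `SV[Γ,s]`: the free `ℂ`-module on `Idx`. -/
abbrev SV : Type := Idx Γ s →₀ ℂ

/-- The basis vector `L_{α,i}`. -/
def lgen (α : ℂ) (hα : α ∈ Γ) (i : ℕ) : SV Γ s :=
  Finsupp.single (Sum.inl (⟨α, hα⟩, i)) 1

/-- The basis vector `G_{μ,j}`. -/
def ggen (μ : ℂ) (hμ : μ - s ∈ Γ) (j : ℕ) : SV Γ s :=
  Finsupp.single (Sum.inr (⟨μ, hμ⟩, j)) 1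

theorem memLG {α μ : ℂ} (hα : α ∈ Γ) (hμ : μ - s ∈ Γ) : α + μ - s ∈ Γ := by
  have h : α + μ - s = α + (μ - s) := by ring
  rw [h]; exact add_mem hα hμ

theorem memGG (hs : 2 * s ∈ Γ) {μ ν : ℂ} (hμ : μ - s ∈ Γ) (hν : ν - s ∈ Γ) :
    μ + ν ∈ Γ := by
  have h : μ + ν = (μ - s) + (ν - s) + 2 * s := by ring
  rw [h]; exact add_mem (add_mem hμ hν) hs

/-- The bracket on basis vectors (any symbol with second index `-1` is interpreted as `0`;
here this is automatic since the corresponding coefficient vanishes when `i = j = 0`). -/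
def bk (hs : 2 * s ∈ Γ) : Idx Γ s → Idx Γ s → SV Γ s
  | Sum.inl (⟨α, hα⟩, i), Sum.inl (⟨β, hβ⟩, j) =>
      (β - α) • lgen Γ s (α + β) (add_mem hα hβ) (i + j)
        + ((j : ℂ) - (i : ℂ)) • lgen Γ s (α + β) (add_mem hα hβ) (i + j - 1)
  | Sum.inl (⟨α, hα⟩, i), Sum.inr (⟨μ, hμ⟩, j) =>
      (μ - α / 2) • ggen Γ s (α + μ) (memLG Γ s hα hμ) (i + j)
        + ((j : ℂ) - (i : ℂ) / 2) • ggen Γ s (α + μ) (memLG Γ s hα hμ) (i + j - 1)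
  | Sum.inr (⟨μ, hμ⟩, i), Sum.inl (⟨α, hα⟩, j) =>
      -((μ - α / 2) • ggen Γ s (α + μ) (memLG Γ s hα hμ) (j + i)
        + ((i : ℂ) - (j : ℂ) / 2) • ggen Γ s (α + μ) (memLG Γ s hα hμ) (j + i - 1))
  | Sum.inr (⟨μ, hμ⟩, i), Sum.inr (⟨ν, hν⟩, j) =>
      (2 : ℂ) • lgen Γ s (μ + ν) (memGG Γ s hs hμ hν) (i + j)

/-- The bilinear bracket of `SV[Γ,s]`. -/
def bkt (hs : 2 * s ∈ Γ) (x y : SV Γ s) : SV Γ s :=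
  x.sum fun a ca => y.sum fun b cb => (ca * cb) • bk Γ s hs a b

/-- `x` lies in the even part `SV_0̄` (the span of the `L_{α,i}`). -/
def IsEvenElt (x : SV Γ s) : Prop := ∀ b, x (Sum.inr b) = 0

/-- `x` lies in the odd part `SV_1̄` (the span of the `G_{μ,j}`). -/
def IsOddElt (x : SV Γ s) : Prop := ∀ a, x (Sum.inl a) = 0

/-- `x` is `ℤ₂`-homogeneous. -/
def IsHomog (x : SV Γ s) : Prop := IsEvenElt Γ s x ∨ IsOddElt Γ s x

/-- `x` lies in the degree-`γ` component `SV_γ = span{L_{γ,i}, G_{γ,i}}` of the `Ω`-grading. -/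
def InDeg (γ : ℂ) (x : SV Γ s) : Prop :=
  (∀ p : Γ × ℕ, (p.1 : ℂ) ≠ γ → x (Sum.inl p) = 0) ∧
  (∀ q : {μ : ℂ // μ - s ∈ Γ} × ℕ, (q.1 : ℂ) ≠ γ → x (Sum.inr q) = 0)

/-- The group `Ω`, generated by `Γ ∪ {s}`. -/
def Omega : AddSubgroup ℂ := Γ ⊔ AddSubgroup.closure {s}

theorem gamma_mem_Omega {α : ℂ} (hα : α ∈ Γ) : α ∈ Omega Γ s :=
  AddSubgroup.mem_sup_left hα

theorem s_mem_Omega : s ∈ Omega Γ s :=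
  AddSubgroup.mem_sup_right (AddSubgroup.subset_closure (Set.mem_singleton s))

theorem smu_mem_Omega {μ : ℂ} (hμ : μ - s ∈ Γ) : μ ∈ Omega Γ s := by
  have h := add_mem (gamma_mem_Omega Γ s hμ) (s_mem_Omega Γ s)
  rwa [sub_add_cancel] at h

/-- The `Ω`-degree of a basis index. -/
def idxDeg : Idx Γ s → ℂ
  | Sum.inl p => (p.1 : ℂ)
  | Sum.inr q => (q.1 : ℂ)

theorem idxDeg_mem (a : Idx Γ s) : idxDeg Γ s a ∈ Omega Γ s := by
  cases a with
  | inl p => exact gamma_mem_Omega Γ s p.1.2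
  | inr q => exact smu_mem_Omega Γ s q.1.2

/-- The derivation `D_φ` attached to a group homomorphism `φ : (Ω,+) → (ℂ,+)`:
`D_φ (L_{α,i}) = φ(α) • L_{α,i}` and `D_φ (G_{μ,j}) = φ(μ) • G_{μ,j}`. -/
def Dphi (φ : ↥(Omega Γ s) →+ ℂ) : SV Γ s →ₗ[ℂ] SV Γ s :=
  Finsupp.lsum ℂ fun a => φ ⟨idxDeg Γ s a, idxDeg_mem Γ s a⟩ • Finsupp.lsingle a

/-- `D` is a parity-`0` (even) derivation of `SV[Γ,s]`. -/
def IsEvenDer (hs : 2 * s ∈ Γ) (D : SV Γ s →ₗ[ℂ] SV Γ s) : Prop :=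
  (∀ x, IsEvenElt Γ s x → IsEvenElt Γ s (D x)) ∧
  (∀ x, IsOddElt Γ s x → IsOddElt Γ s (D x)) ∧
  (∀ x y, IsHomog Γ s x →
    D (bkt Γ s hs x y) = bkt Γ s hs (D x) y + bkt Γ s hs x (D y))

/-- `D` is a parity-`1` (odd) derivation of `SV[Γ,s]`. -/
def IsOddDer (hs : 2 * s ∈ Γ) (D : SV Γ s →ₗ[ℂ] SV Γ s) : Prop :=
  (∀ x, IsEvenElt Γ s x → IsOddElt Γ s (D x)) ∧
  (∀ x, IsOddElt Γ s x → IsEvenElt Γ s (D x)) ∧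
  (∀ x y, IsEvenElt Γ s x →
    D (bkt Γ s hs x y) = bkt Γ s hs (D x) y + bkt Γ s hs x (D y)) ∧
  (∀ x y, IsOddElt Γ s x →
    D (bkt Γ s hs x y) = bkt Γ s hs (D x) y - bkt Γ s hs x (D y))

/-- `D` is a derivation of `SV[Γ,s]`: a sum of an even and an odd derivation. -/
def IsDer (hs : 2 * s ∈ Γ) (D : SV Γ s →ₗ[ℂ] SV Γ s) : Prop :=
  ∃ D0 D1, IsEvenDer Γ s hs D0 ∧ IsOddDer Γ s hs D1 ∧ D = D0 + D1

/-- `D` has degree `γ`: it maps `SV_δ` into `SV_{δ+γ}` for every `δ`. -/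
def HasDeg (γ : ℂ) (D : SV Γ s →ₗ[ℂ] SV Γ s) : Prop :=
  ∀ (δ : ℂ) (x : SV Γ s), InDeg Γ s δ x → InDeg Γ s (δ + γ) (D x)

/-- `ψ` is a 2-cocycle on `SV[Γ,s]` (super skew-symmetry and super Jacobi identity,
with the sign `(-1)^{|x||y|}` spelled out according to the parities). -/
def IsCocycle (hs : 2 * s ∈ Γ) (ψ : SV Γ s →ₗ[ℂ] SV Γ s →ₗ[ℂ] ℂ) : Prop :=
  (∀ x y, IsHomog Γ s x → IsHomog Γ s y → (IsEvenElt Γ s x ∨ IsEvenElt Γ s y) →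
    ψ x y = - ψ y x) ∧
  (∀ x y, IsOddElt Γ s x → IsOddElt Γ s y → ψ x y = ψ y x) ∧
  (∀ x y z, IsHomog Γ s x → IsHomog Γ s y → (IsEvenElt Γ s x ∨ IsEvenElt Γ s y) →
    ψ x (bkt Γ s hs y z) = ψ (bkt Γ s hs x y) z + ψ y (bkt Γ s hs x z)) ∧
  (∀ x y z, IsOddElt Γ s x → IsOddElt Γ s y →
    ψ x (bkt Γ s hs y z) = ψ (bkt Γ s hs x y) z - ψ y (bkt Γ s hs x z))

/-- `f : SV → ℂ` satisfies the recursive formulas associated to the 2-cocycle `ψ`. -/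
def IsAssocMap (hs : 2 * s ∈ Γ) (ψ : SV Γ s →ₗ[ℂ] SV Γ s →ₗ[ℂ] ℂ)
    (f : SV Γ s →ₗ[ℂ] ℂ) : Prop :=
  (∀ i : ℕ, f (lgen Γ s 0 (zero_mem Γ) i)
      = ψ (lgen Γ s 0 (zero_mem Γ) 0) (lgen Γ s 0 (zero_mem Γ) (i + 1)) / (i + 1)) ∧
  (∀ (α : ℂ) (hα : α ∈ Γ) (i : ℕ), α ≠ 0 →
    f (lgen Γ s α hα i)
      = (ψ (lgen Γ s 0 (zero_mem Γ) 0) (lgen Γ s α hα i) - (i : ℂ) * f (lgen Γ s α hα (i - 1))) / α) ∧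
  (∀ (h0 : (0 : ℂ) - s ∈ Γ) (i : ℕ),
    f (ggen Γ s 0 h0 i) = (2 / (2 * (i : ℂ) - 1)) * ψ (lgen Γ s 0 (zero_mem Γ) 1) (ggen Γ s 0 h0 i)) ∧
  (∀ (μ : ℂ) (hμ : μ - s ∈ Γ) (i : ℕ), μ ≠ 0 →
    f (ggen Γ s μ hμ i)
      = (ψ (lgen Γ s 0 (zero_mem Γ) 0) (ggen Γ s μ hμ i) - (i : ℂ) * f (ggen Γ s μ hμ (i - 1))) / μ)


/-! ### Auxiliary material for `cocycle_LL` -/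

section AuxLL
variable {Γ : AddSubgroup ℂ} {s : ℂ}

theorem lgen_congr {x y : ℂ} (h : x = y) (hx : x ∈ Γ) (hy : y ∈ Γ) (i : ℕ) :
    lgen Γ s x hx i = lgen Γ s y hy i := by subst h; rfl

theorem lgen_isEven (α : ℂ) (hα : α ∈ Γ) (i : ℕ) : IsEvenElt Γ s (lgen Γ s α hα i) := by
  intro b; simp [lgen, IsEvenElt, Finsupp.single_apply]

theorem lgen_isHomog (α : ℂ) (hα : α ∈ Γ) (i : ℕ) : IsHomog Γ s (lgen Γ s α hα i) :=
  Or.inl (lgen_isEven α hα i)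

variable (hs : 2 * s ∈ Γ)

theorem bkt_single_single (a b : Idx Γ s) (c d : ℂ) :
    bkt Γ s hs (Finsupp.single a c) (Finsupp.single b d) = (c * d) • bk Γ s hs a b := by
  unfold bkt
  rw [Finsupp.sum_single_index (by simp), Finsupp.sum_single_index (by simp)]

theorem bkt_ll (α β : ℂ) (hα : α ∈ Γ) (hβ : β ∈ Γ) (i j : ℕ) :
    bkt Γ s hs (lgen Γ s α hα i) (lgen Γ s β hβ j)
      = (β - α) • lgen Γ s (α + β) (add_mem hα hβ) (i + j)
        + ((j : ℂ) - (i : ℂ)) • lgen Γ s (α + β) (add_mem hα hβ) (i + j - 1) := by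
  rw [lgen, lgen, bkt_single_single, one_mul, one_smul]
  rfl

theorem bkt_0l (i : ℕ) (γ : ℂ) (hγ : γ ∈ Γ) (m : ℕ) :
    bkt Γ s hs (lgen Γ s 0 (zero_mem Γ) i) (lgen Γ s γ hγ m)
      = γ • lgen Γ s γ hγ (i + m) + ((m : ℂ) - (i : ℂ)) • lgen Γ s γ hγ (i + m - 1) := by
  rw [bkt_ll, sub_zero]
  simp only [lgen_congr (zero_add γ) (add_mem (zero_mem Γ) hγ) hγ]

theorem bkt_l0 (α : ℂ) (hα : α ∈ Γ) (i j : ℕ) :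
    bkt Γ s hs (lgen Γ s α hα i) (lgen Γ s 0 (zero_mem Γ) j)
      = (-α) • lgen Γ s α hα (i + j) + ((j : ℂ) - (i : ℂ)) • lgen Γ s α hα (i + j - 1) := by
  rw [bkt_ll, zero_sub]
  simp only [lgen_congr (add_zero α) (add_mem hα (zero_mem Γ)) hα]

theorem bkt_mneg (α : ℂ) (hα : α ∈ Γ) (hmα : -α ∈ Γ) (i j : ℕ) :
    bkt Γ s hs (lgen Γ s α hα i) (lgen Γ s (-α) hmα j)
      = (-(2 * α)) • lgen Γ s 0 (zero_mem Γ) (i + j)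
        + ((j : ℂ) - (i : ℂ)) • lgen Γ s 0 (zero_mem Γ) (i + j - 1) := by
  rw [bkt_ll, show -α - α = -(2 * α) by ring]
  simp only [lgen_congr (add_neg_cancel α) (add_mem hα hmα) (zero_mem Γ)]

theorem bkt_negm (α : ℂ) (hα : α ∈ Γ) (hmα : -α ∈ Γ) (i j : ℕ) :
    bkt Γ s hs (lgen Γ s (-α) hmα i) (lgen Γ s α hα j)
      = (2 * α) • lgen Γ s 0 (zero_mem Γ) (i + j)
        + ((j : ℂ) - (i : ℂ)) • lgen Γ s 0 (zero_mem Γ) (i + j - 1) := by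
  rw [bkt_ll, show α - -α = 2 * α by ring]
  simp only [lgen_congr (neg_add_cancel α) (add_mem hmα hα) (zero_mem Γ)]

variable (ψ : SV Γ s →ₗ[ℂ] SV Γ s →ₗ[ℂ] ℂ) (f : SV Γ s →ₗ[ℂ] ℂ)

/-- The reduced cocycle `φ = ψ - ψ_f` evaluated on a pair of `L` generators. -/
def PLL (α : ℂ) (hα : α ∈ Γ) (i : ℕ) (β : ℂ) (hβ : β ∈ Γ) (j : ℕ) : ℂ :=
  ψ (lgen Γ s α hα i) (lgen Γ s β hβ j)
    - f (bkt Γ s hs (lgen Γ s α hα i) (lgen Γ s β hβ j))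

variable (hψ : IsCocycle Γ s hs ψ) (hf : IsAssocMap Γ s hs ψ f)

include hψ hf in
theorem psi00 (γ : ℂ) (hγ : γ ∈ Γ) (m : ℕ) :
    ψ (lgen Γ s 0 (zero_mem Γ) 0) (lgen Γ s γ hγ m)
      = γ * f (lgen Γ s γ hγ m) + (m : ℂ) * f (lgen Γ s γ hγ (m - 1)) := by
  by_cases hg : γ = 0
  · subst hg
    cases m with
    | zero =>
        have sk := hψ.1 (lgen Γ s 0 (zero_mem Γ) 0) (lgen Γ s 0 (zero_mem Γ) 0)
          (lgen_isHomog _ _ _) (lgen_isHomog _ _ _) (Or.inl (lgen_isEven _ _ _))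
        norm_num
        linear_combination sk / 2
    | succ k =>
        rw [Nat.add_sub_cancel, hf.1 k]
        have hk : ((k : ℂ) + 1) ≠ 0 := Nat.cast_add_one_ne_zero k
        push_cast
        field_simp
        ring
  · rw [hf.2.1 γ hγ m hg]
    field_simp
    ring

include hψ hf in
theorem P0 (γ : ℂ) (hγ : γ ∈ Γ) (m : ℕ) : PLL hs ψ f 0 (zero_mem Γ) 0 γ hγ m = 0 := by
  simp only [PLL]
  rw [bkt_0l hs 0 γ hγ m, psi00 hs ψ f hψ hf γ hγ m]
  simp only [map_add, map_smul, smul_eq_mul, Nat.zero_add, Nat.cast_zero, sub_zero]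
  ring

include hψ hf in
theorem relA (α β : ℂ) (hα : α ∈ Γ) (hβ : β ∈ Γ) (i j : ℕ) :
    (α + β) * PLL hs ψ f α hα i β hβ j + (i : ℂ) * PLL hs ψ f α hα (i - 1) β hβ j
      + (j : ℂ) * PLL hs ψ f α hα i β hβ (j - 1) = 0 := by
  have jac := hψ.2.2.1 (lgen Γ s 0 (zero_mem Γ) 0) (lgen Γ s α hα i) (lgen Γ s β hβ j)
      (lgen_isHomog _ _ _) (lgen_isHomog _ _ _) (Or.inl (lgen_isEven _ _ _))
  rw [bkt_ll hs α β hα hβ i j, bkt_0l hs 0 α hα i, bkt_0l hs 0 β hβ j] at jac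
  simp only [map_add, map_smul, LinearMap.add_apply, LinearMap.smul_apply, smul_eq_mul,
    Nat.zero_add, Nat.cast_zero, sub_zero] at jac
  rw [psi00 hs ψ f hψ hf (α + β) (add_mem hα hβ) (i + j),
      psi00 hs ψ f hψ hf (α + β) (add_mem hα hβ) (i + j - 1)] at jac
  simp only [PLL]
  rw [bkt_ll hs α β hα hβ i j, bkt_ll hs α β hα hβ (i - 1) j, bkt_ll hs α β hα hβ i (j - 1)]
  simp only [map_add, map_smul, smul_eq_mul]
  rcases Nat.eq_zero_or_pos i with rfl | hi
  · simp only [Nat.zero_sub, Nat.zero_add, Nat.cast_zero, zero_sub, sub_zero] at jac ⊢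
    linear_combination -jac
  · rcases Nat.eq_zero_or_pos j with rfl | hj
    · simp only [Nat.zero_sub, Nat.add_zero, Nat.cast_zero, zero_sub, sub_zero] at jac ⊢
      linear_combination -jac
    · rw [show i - 1 + j = i + j - 1 by omega, show i + (j - 1) = i + j - 1 by omega,
          Nat.cast_sub hi, Nat.cast_sub hj, Nat.cast_one]
      rw [Nat.cast_add, Nat.cast_sub (by omega : 1 ≤ i + j), Nat.cast_add, Nat.cast_one] at jac
      linear_combination -jac

omit hf in
include hψ in
theorem relB (b c : ℕ) :
    ((b : ℂ) + (c : ℂ) - 2) * PLL hs ψ f 0 (zero_mem Γ) b 0 (zero_mem Γ) c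
      - ((c : ℂ) - (b : ℂ)) * PLL hs ψ f 0 (zero_mem Γ) 1 0 (zero_mem Γ) (b + c - 1) = 0 := by
  have jac := hψ.2.2.1 (lgen Γ s 0 (zero_mem Γ) 1) (lgen Γ s 0 (zero_mem Γ) b)
      (lgen Γ s 0 (zero_mem Γ) c)
      (lgen_isHomog _ _ _) (lgen_isHomog _ _ _) (Or.inl (lgen_isEven _ _ _))
  rw [bkt_0l hs b 0 (zero_mem Γ) c, bkt_0l hs 1 0 (zero_mem Γ) b,
      bkt_0l hs 1 0 (zero_mem Γ) c] at jac
  simp only [zero_smul, zero_add, map_add, map_smul, LinearMap.add_apply,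
    LinearMap.smul_apply, smul_eq_mul, map_zero, LinearMap.zero_apply, Nat.cast_one,
    Nat.add_sub_cancel_left] at jac
  simp only [PLL]
  rw [bkt_0l hs b 0 (zero_mem Γ) c, bkt_0l hs 1 0 (zero_mem Γ) (b + c - 1)]
  simp only [zero_smul, zero_add, map_add, map_smul, smul_eq_mul, map_zero, Nat.cast_one,
    Nat.add_sub_cancel_left]
  rcases Nat.eq_zero_or_pos (b + c) with h0 | h1
  · obtain ⟨rfl, rfl⟩ : b = 0 ∧ c = 0 := by omega
    linear_combination -jac
  · rw [Nat.cast_sub (by omega : 1 ≤ b + c), Nat.cast_add, Nat.cast_one]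
    linear_combination -jac

include hψ in
theorem relC (α : ℂ) (hα : α ∈ Γ) (hmα : -α ∈ Γ) (i j : ℕ) :
    (-α) * PLL hs ψ f (-α) hmα 0 α hα (i + j)
      + ((j : ℂ) - (i : ℂ)) * PLL hs ψ f (-α) hmα 0 α hα (i + j - 1)
      - (2 * α * PLL hs ψ f 0 (zero_mem Γ) i 0 (zero_mem Γ) j
        + (i : ℂ) * PLL hs ψ f 0 (zero_mem Γ) (i - 1) 0 (zero_mem Γ) j
        + α * PLL hs ψ f α hα i (-α) hmα j
        + (j : ℂ) * PLL hs ψ f α hα i (-α) hmα (j - 1)) = 0 := by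
  have jac := hψ.2.2.1 (lgen Γ s (-α) hmα 0) (lgen Γ s α hα i) (lgen Γ s 0 (zero_mem Γ) j)
      (lgen_isHomog _ _ _) (lgen_isHomog _ _ _) (Or.inl (lgen_isEven _ _ _))
  rw [bkt_l0 hs α hα i j, bkt_negm hs α hα hmα 0 i, bkt_l0 hs (-α) hmα 0 j] at jac
  simp only [map_add, map_smul, LinearMap.add_apply, LinearMap.smul_apply, smul_eq_mul,
    Nat.zero_add, Nat.cast_zero, sub_zero, neg_neg] at jac
  simp only [PLL]
  rw [bkt_negm hs α hα hmα 0 (i + j), bkt_negm hs α hα hmα 0 (i + j - 1),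
      bkt_0l hs i 0 (zero_mem Γ) j, bkt_0l hs (i - 1) 0 (zero_mem Γ) j,
      bkt_mneg hs α hα hmα i j, bkt_mneg hs α hα hmα i (j - 1)]
  simp only [zero_smul, zero_add, map_add, map_smul, smul_eq_mul, map_zero,
    Nat.zero_add, Nat.cast_zero, sub_zero]
  rcases Nat.eq_zero_or_pos i with rfl | hi
  · simp only [Nat.zero_sub, Nat.zero_add, Nat.cast_zero, zero_sub, sub_zero] at jac ⊢
    linear_combination jac
  · rcases Nat.eq_zero_or_pos j with rfl | hj
    · simp only [Nat.zero_sub, Nat.add_zero, Nat.cast_zero, zero_sub, sub_zero] at jac ⊢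
      linear_combination jac
    · rw [show i - 1 + j = i + j - 1 by omega, show i + (j - 1) = i + j - 1 by omega,
          Nat.cast_sub hi, Nat.cast_sub hj, Nat.cast_sub (by omega : 1 ≤ i + j),
          Nat.cast_add, Nat.cast_one]
      linear_combination jac

end AuxLL

/-- For a 2-cocycle `ψ` with associated map `f`, the 2-cocycle `φ = ψ - ψ_f`
vanishes on pairs `(L_{α,i}, L_{β,j})`. -/
theorem cocycle_LL (Γ : AddSubgroup ℂ) (hΓ : ∀ n : ℤ, (n : ℂ) ∈ Γ)
    (s : ℂ) (hs : 2 * s ∈ Γ) :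
    ∀ ψ : SV Γ s →ₗ[ℂ] SV Γ s →ₗ[ℂ] ℂ, IsCocycle Γ s hs ψ →
      ∀ f : SV Γ s →ₗ[ℂ] ℂ, IsAssocMap Γ s hs ψ f →
        ∀ (α : ℂ) (hα : α ∈ Γ) (i : ℕ) (β : ℂ) (hβ : β ∈ Γ) (j : ℕ),
          ψ (lgen Γ s α hα i) (lgen Γ s β hβ j)
            - f (bkt Γ s hs (lgen Γ s α hα i) (lgen Γ s β hβ j)) = 0 := by
  intro ψ hψ f hf
  have S : ∀ i j : ℕ, (i : ℂ) * PLL hs ψ f 0 (zero_mem Γ) (i - 1) 0 (zero_mem Γ) j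
      + (j : ℂ) * PLL hs ψ f 0 (zero_mem Γ) i 0 (zero_mem Γ) (j - 1) = 0 := by
    intro i j
    linear_combination relA hs ψ f hψ hf 0 0 (zero_mem Γ) (zero_mem Γ) i j
  have h1 : ∀ k : ℕ, PLL hs ψ f 0 (zero_mem Γ) 1 0 (zero_mem Γ) k = 0 := by
    intro k
    have hS := S 1 (k + 1)
    rw [show (1 : ℕ) - 1 = 0 by omega, Nat.add_sub_cancel, P0 hs ψ f hψ hf 0 (zero_mem Γ) (k + 1)] at hS
    have h2 : ((k : ℂ) + 1) * PLL hs ψ f 0 (zero_mem Γ) 1 0 (zero_mem Γ) k = 0 := by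
      push_cast at hS
      linear_combination hS
    exact (mul_eq_zero.mp h2).resolve_left (Nat.cast_add_one_ne_zero k)
  have hA : ∀ b c : ℕ, PLL hs ψ f 0 (zero_mem Γ) b 0 (zero_mem Γ) c = 0 := by
    intro b c
    by_cases hbc : (b : ℂ) + (c : ℂ) - 2 = 0
    · have hbc2 : b + c = 2 := by
        have h3 : ((b + c : ℕ) : ℂ) = 2 := by push_cast; linear_combination hbc
        exact_mod_cast h3
      have h4 : b = 0 ∧ c = 2 ∨ b = 1 ∧ c = 1 ∨ b = 2 ∧ c = 0 := by omega
      rcases h4 with ⟨rfl, rfl⟩ | ⟨rfl, rfl⟩ | ⟨rfl, rfl⟩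
      · exact P0 hs ψ f hψ hf 0 (zero_mem Γ) 2
      · exact h1 1
      · have hS := S 3 0
        rw [show (3 : ℕ) - 1 = 2 by omega] at hS
        have h2 : (3 : ℂ) * PLL hs ψ f 0 (zero_mem Γ) 2 0 (zero_mem Γ) 0 = 0 := by
          push_cast at hS
          linear_combination hS
        exact (mul_eq_zero.mp h2).resolve_left (by norm_num)
    · have hR := relB hs ψ f hψ b c
      rw [h1] at hR
      have h2 : ((b : ℂ) + (c : ℂ) - 2) * PLL hs ψ f 0 (zero_mem Γ) b 0 (zero_mem Γ) c = 0 := by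
        linear_combination hR
      exact (mul_eq_zero.mp h2).resolve_left hbc
  have hQ : ∀ (α' β' : ℂ) (hα' : α' ∈ Γ) (hβ' : β' ∈ Γ), α' + β' = 0 → ∀ m : ℕ,
      PLL hs ψ f α' hα' 0 β' hβ' m = 0 := by
    intro α' β' hα' hβ' hab m
    have hR := relA hs ψ f hψ hf α' β' hα' hβ' 0 (m + 1)
    rw [hab, Nat.add_sub_cancel] at hR
    have h2 : ((m : ℂ) + 1) * PLL hs ψ f α' hα' 0 β' hβ' m = 0 := by
      push_cast at hR
      linear_combination hR
    exact (mul_eq_zero.mp h2).resolve_left (Nat.cast_add_one_ne_zero m)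
  have hB : ∀ (α' : ℂ) (hα' : α' ∈ Γ) (hmα' : -α' ∈ Γ), α' ≠ 0 → ∀ i j : ℕ,
      PLL hs ψ f α' hα' i (-α') hmα' j = 0 := by
    intro α' hα' hmα' ha0 i j
    have key : ∀ i j : ℕ, α' * PLL hs ψ f α' hα' i (-α') hmα' j
        + (j : ℂ) * PLL hs ψ f α' hα' i (-α') hmα' (j - 1) = 0 := by
      intro i j
      have hC := relC hs ψ f hψ α' hα' hmα' i j
      rw [hQ (-α') α' hmα' hα' (by ring) (i + j), hQ (-α') α' hmα' hα' (by ring) (i + j - 1),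
          hA i j, hA (i - 1) j] at hC
      linear_combination -hC
    induction j with
    | zero =>
        have h2 := key i 0
        have h3 : α' * PLL hs ψ f α' hα' i (-α') hmα' 0 = 0 := by
          push_cast at h2
          linear_combination h2
        exact (mul_eq_zero.mp h3).resolve_left ha0
    | succ n ih =>
        have h2 := key i (n + 1)
        rw [Nat.add_sub_cancel, ih] at h2
        have h3 : α' * PLL hs ψ f α' hα' i (-α') hmα' (n + 1) = 0 := by
          linear_combination h2
        exact (mul_eq_zero.mp h3).resolve_left ha0
  have hNE : ∀ (α' β' : ℂ) (hα' : α' ∈ Γ) (hβ' : β' ∈ Γ), α' + β' ≠ 0 → ∀ n i j : ℕ,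
      i + j ≤ n → PLL hs ψ f α' hα' i β' hβ' j = 0 := by
    intro α' β' hα' hβ' hab n
    induction n with
    | zero =>
        intro i j hij
        obtain ⟨rfl, rfl⟩ : i = 0 ∧ j = 0 := by omega
        have hR := relA hs ψ f hψ hf α' β' hα' hβ' 0 0
        have h2 : (α' + β') * PLL hs ψ f α' hα' 0 β' hβ' 0 = 0 := by
          push_cast at hR
          linear_combination hR
        exact (mul_eq_zero.mp h2).resolve_left hab
    | succ n ih =>
        intro i j hij
        have hR := relA hs ψ f hψ hf α' β' hα' hβ' i j
        have t1 : (i : ℂ) * PLL hs ψ f α' hα' (i - 1) β' hβ' j = 0 := by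
          rcases Nat.eq_zero_or_pos i with rfl | hi
          · simp
          · rw [ih (i - 1) j (by omega)]; ring
        have t2 : (j : ℂ) * PLL hs ψ f α' hα' i β' hβ' (j - 1) = 0 := by
          rcases Nat.eq_zero_or_pos j with rfl | hj
          · simp
          · rw [ih i (j - 1) (by omega)]; ring
        have h2 : (α' + β') * PLL hs ψ f α' hα' i β' hβ' j = 0 := by
          linear_combination hR - t1 - t2
        exact (mul_eq_zero.mp h2).resolve_left hab
  intro α hα i β hβ j
  by_cases hab : α + β = 0
  · have hb : β = -α := by linear_combination hab
    subst hb
    by_cases ha : α = 0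
    · subst ha
      have h5 := hA i j
      rw [lgen_congr (neg_zero) hβ (zero_mem Γ) j]
      exact h5
    · exact hB α hα hβ ha i j
  · exact hNE α β hα hβ hab (i + j) i j le_rfl

end SVSuper
end
end

section
/- Let ψ be a 2-cocycle on SV = SV[Γ,s] and let f be the linear map associated to ψ by the recursive formulas below; set φ = ψ − ψ_f. Then φ(L_{α,i}, G_{μ,j}) = 0 for all α ∈ Γ, μ ∈ s+Γ and all i, j ∈ ℤ_{≥0}. -/
noncomputable section

namespace SVSuper

variable (Γ : AddSubgroup ℂ) (s : ℂ)

/-! ### Auxiliary lemmas -/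

theorem lgen_congr_s16 {α β : ℂ} (h : α = β) (hα : α ∈ Γ) (hβ : β ∈ Γ) (i : ℕ) :
    lgen Γ s α hα i = lgen Γ s β hβ i := by subst h; rfl

theorem ggen_congr {μ ν : ℂ} (h : μ = ν) (hμ : μ - s ∈ Γ) (hν : ν - s ∈ Γ) (j : ℕ) :
    ggen Γ s μ hμ j = ggen Γ s ν hν j := by subst h; rfl

theorem bkt_single (hs : 2 * s ∈ Γ) (a b : Idx Γ s) :
    bkt Γ s hs (Finsupp.single a 1) (Finsupp.single b 1) = bk Γ s hs a b := by
  unfold bkt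
  rw [Finsupp.sum_single_index, Finsupp.sum_single_index] <;> simp

theorem bkt_LL (hs : 2 * s ∈ Γ) {α β : ℂ} (hα : α ∈ Γ) (hβ : β ∈ Γ) (i j : ℕ) :
    bkt Γ s hs (lgen Γ s α hα i) (lgen Γ s β hβ j)
      = (β - α) • lgen Γ s (α + β) (add_mem hα hβ) (i + j)
        + ((j : ℂ) - (i : ℂ)) • lgen Γ s (α + β) (add_mem hα hβ) (i + j - 1) := by
  rw [lgen, lgen, bkt_single]; rfl

theorem bkt_LG (hs : 2 * s ∈ Γ) {α μ : ℂ} (hα : α ∈ Γ) (hμ : μ - s ∈ Γ) (i j : ℕ) :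
    bkt Γ s hs (lgen Γ s α hα i) (ggen Γ s μ hμ j)
      = (μ - α / 2) • ggen Γ s (α + μ) (memLG Γ s hα hμ) (i + j)
        + ((j : ℂ) - (i : ℂ) / 2) • ggen Γ s (α + μ) (memLG Γ s hα hμ) (i + j - 1) := by
  rw [lgen, ggen, bkt_single]; rfl

theorem bkt_L0_L (hs : 2 * s ∈ Γ) (m : ℕ) {β : ℂ} (hβ : β ∈ Γ) (i : ℕ) :
    bkt Γ s hs (lgen Γ s 0 (zero_mem Γ) m) (lgen Γ s β hβ i)
      = β • lgen Γ s β hβ (m + i) + ((i : ℂ) - (m : ℂ)) • lgen Γ s β hβ (m + i - 1) := by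
  rw [bkt_LL, lgen_congr_s16 Γ s (zero_add β) _ hβ (m + i),
    lgen_congr_s16 Γ s (zero_add β) _ hβ (m + i - 1), sub_zero]

theorem bkt_L0_G (hs : 2 * s ∈ Γ) (m : ℕ) {μ : ℂ} (hμ : μ - s ∈ Γ) (j : ℕ) :
    bkt Γ s hs (lgen Γ s 0 (zero_mem Γ) m) (ggen Γ s μ hμ j)
      = μ • ggen Γ s μ hμ (m + j) + ((j : ℂ) - (m : ℂ) / 2) • ggen Γ s μ hμ (m + j - 1) := by
  rw [bkt_LG, ggen_congr Γ s (zero_add μ) _ hμ (m + j),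
    ggen_congr Γ s (zero_add μ) _ hμ (m + j - 1), zero_div, sub_zero]

theorem lgen_even {α : ℂ} (hα : α ∈ Γ) (i : ℕ) : IsEvenElt Γ s (lgen Γ s α hα i) :=
  fun b => Finsupp.single_eq_of_ne (by simp)

theorem ggen_odd {μ : ℂ} (hμ : μ - s ∈ Γ) (j : ℕ) : IsOddElt Γ s (ggen Γ s μ hμ j) :=
  fun a => Finsupp.single_eq_of_ne (by simp)

theorem lgen_homog {α : ℂ} (hα : α ∈ Γ) (i : ℕ) : IsHomog Γ s (lgen Γ s α hα i) :=
  Or.inl (lgen_even Γ s hα i)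

theorem ggen_homog {μ : ℂ} (hμ : μ - s ∈ Γ) (j : ℕ) : IsHomog Γ s (ggen Γ s μ hμ j) :=
  Or.inr (ggen_odd Γ s hμ j)

theorem natCast_eq_of_complex {n m : ℕ} (h : (n : ℂ) = (m : ℂ)) : n = m :=
  Nat.cast_injective h

theorem two_n_sub_one_ne (n : ℕ) : (2 * (n : ℂ) - 1) ≠ 0 := by
  intro h
  have h2 : ((2 * n : ℕ) : ℂ) = ((1 : ℕ) : ℂ) := by push_cast; linear_combination h
  have := natCast_eq_of_complex h2
  omega

theorem n_sub_threehalf_ne (n m : ℕ) : ((n : ℂ) + (m : ℂ) - 3 / 2) ≠ 0 := by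
  intro h
  have h2 : ((2 * (n + m) : ℕ) : ℂ) = ((3 : ℕ) : ℂ) := by push_cast; linear_combination 2 * h
  have := natCast_eq_of_complex h2
  omega

theorem n_add_two_ne (n m : ℕ) : ((n : ℂ) + (m : ℂ) + 2) ≠ 0 := by
  intro h
  have h2 : ((n + m + 2 : ℕ) : ℂ) = ((0 : ℕ) : ℂ) := by push_cast; linear_combination h
  have := natCast_eq_of_complex h2
  omega

theorem psi_L01_G0 (hs : 2 * s ∈ Γ) (ψ : SV Γ s →ₗ[ℂ] SV Γ s →ₗ[ℂ] ℂ)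
    (f : SV Γ s →ₗ[ℂ] ℂ) (hf : IsAssocMap Γ s hs ψ f)
    {ν : ℂ} (hν : ν - s ∈ Γ) (hν0 : ν = 0) (k : ℕ) :
    ψ (lgen Γ s 0 (zero_mem Γ) 1) (ggen Γ s ν hν k)
      = ((k : ℂ) - 1 / 2) * f (ggen Γ s ν hν k) := by
  subst hν0
  rw [hf.2.2.1 hν k]
  have h := two_n_sub_one_ne k
  rw [← mul_assoc, show ((k : ℂ) - 1 / 2) * (2 / (2 * (k : ℂ) - 1)) = (2 * (k : ℂ) - 1) / (2 * (k : ℂ) - 1) by ring,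
    div_self h, one_mul]

theorem psi_L00_G (hs : 2 * s ∈ Γ) (ψ : SV Γ s →ₗ[ℂ] SV Γ s →ₗ[ℂ] ℂ)
    (hψ : IsCocycle Γ s hs ψ) (f : SV Γ s →ₗ[ℂ] ℂ) (hf : IsAssocMap Γ s hs ψ f)
    {ν : ℂ} (hν : ν - s ∈ Γ) (k : ℕ) :
    ψ (lgen Γ s 0 (zero_mem Γ) 0) (ggen Γ s ν hν k)
      = ν * f (ggen Γ s ν hν k) + (k : ℂ) * f (ggen Γ s ν hν (k - 1)) := by
  by_cases hν0 : ν = 0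
  · subst hν0
    have hc := hψ.2.2.1 (lgen Γ s 0 (zero_mem Γ) 1) (lgen Γ s 0 (zero_mem Γ) 0)
      (ggen Γ s 0 hν k) (lgen_homog Γ s _ _) (lgen_homog Γ s _ _)
      (Or.inl (lgen_even Γ s _ _))
    rw [bkt_L0_G Γ s hs 0 hν k, bkt_L0_L Γ s hs 1 (zero_mem Γ) 0,
      bkt_L0_G Γ s hs 1 hν k] at hc
    simp only [map_add, map_smul, LinearMap.add_apply, LinearMap.smul_apply, smul_eq_mul,
      zero_smul, zero_mul, zero_add, add_zero, Nat.cast_zero, Nat.cast_one, zero_div,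
      sub_zero, zero_sub, map_neg, LinearMap.neg_apply, Nat.add_sub_cancel_left,
      Nat.zero_add, mul_zero, Nat.sub_self] at hc
    rw [psi_L01_G0 Γ s hs ψ f hf hν rfl (k - 1)] at hc
    rcases k with _ | k'
    · simp only [Nat.cast_zero, zero_mul, zero_add, mul_zero, Nat.zero_sub] at hc ⊢
      linear_combination (2/3 : ℂ) * hc
    · have hne := two_n_sub_one_ne k'
      simp only [Nat.add_sub_cancel, Nat.cast_add, Nat.cast_one] at hc ⊢
      have h2 : (2 * (k' : ℂ) - 1) * (ψ (lgen Γ s 0 (zero_mem Γ) 0) (ggen Γ s 0 hν (k' + 1))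
          - (0 * f (ggen Γ s 0 hν (k' + 1)) + ((k' : ℂ) + 1) * f (ggen Γ s 0 hν k'))) = 0 := by
        linear_combination (-2 : ℂ) * hc
      have h3 := mul_eq_zero.mp h2
      rcases h3 with h3 | h3
      · exact absurd h3 hne
      · linear_combination h3
  · have h := hf.2.2.2 ν hν k hν0
    field_simp at h
    linear_combination -h

/-- The value `φ(L_{α,i}, G_{μ,j})` of the corrected cocycle `φ = ψ - ψ_f`. -/
def Bv (ψ : SV Γ s →ₗ[ℂ] SV Γ s →ₗ[ℂ] ℂ) (f : SV Γ s →ₗ[ℂ] ℂ)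
    (α : ℂ) (hα : α ∈ Γ) (μ : ℂ) (hμ : μ - s ∈ Γ) (i j : ℕ) : ℂ :=
  ψ (lgen Γ s α hα i) (ggen Γ s μ hμ j)
    - ((μ - α / 2) * f (ggen Γ s (α + μ) (memLG Γ s hα hμ) (i + j))
      + ((j : ℂ) - (i : ℂ) / 2) * f (ggen Γ s (α + μ) (memLG Γ s hα hμ) (i + j - 1)))

theorem rel1 (hs : 2 * s ∈ Γ) (ψ : SV Γ s →ₗ[ℂ] SV Γ s →ₗ[ℂ] ℂ)
    (hψ : IsCocycle Γ s hs ψ) (f : SV Γ s →ₗ[ℂ] ℂ) (hf : IsAssocMap Γ s hs ψ f)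
    {α μ : ℂ} (hα : α ∈ Γ) (hμ : μ - s ∈ Γ) (i j : ℕ) :
    (α + μ) * Bv Γ s ψ f α hα μ hμ i j + (i : ℂ) * Bv Γ s ψ f α hα μ hμ (i - 1) j
      + (j : ℂ) * Bv Γ s ψ f α hα μ hμ i (j - 1) = 0 := by
  have hc := hψ.2.2.1 (lgen Γ s 0 (zero_mem Γ) 0) (lgen Γ s α hα i) (ggen Γ s μ hμ j)
    (lgen_homog Γ s _ _) (lgen_homog Γ s _ _) (Or.inl (lgen_even Γ s _ _))
  rw [bkt_LG Γ s hs hα hμ i j, bkt_L0_L Γ s hs 0 hα i, bkt_L0_G Γ s hs 0 hμ j] at hc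
  simp only [map_add, map_smul, LinearMap.add_apply, LinearMap.smul_apply, smul_eq_mul,
    Nat.cast_zero, zero_div, sub_zero, Nat.zero_add] at hc
  rw [psi_L00_G Γ s hs ψ hψ f hf (memLG Γ s hα hμ) (i + j),
    psi_L00_G Γ s hs ψ hψ f hf (memLG Γ s hα hμ) (i + j - 1)] at hc
  simp only [Bv]
  rcases i with _ | a <;> rcases j with _ | b
  · simp only [Nat.zero_sub, Nat.sub_zero, Nat.zero_add, Nat.add_zero, Nat.cast_zero] at hc ⊢
    linear_combination -hc
  · have e7 : b + 1 - 1 = b := by omega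
    simp only [e7, Nat.zero_sub, Nat.sub_zero, Nat.zero_add, Nat.add_zero, Nat.cast_zero] at hc ⊢
    push_cast at hc ⊢
    linear_combination -hc
  · have e4 : a + 1 - 1 = a := by omega
    simp only [e4, Nat.zero_sub, Nat.sub_zero, Nat.zero_add, Nat.add_zero, Nat.cast_zero] at hc ⊢
    push_cast at hc ⊢
    linear_combination -hc
  · have e1 : a + 1 + (b + 1) = a + b + 2 := by omega
    have e5 : a + (b + 1) = a + b + 1 := by omega
    have e8 : a + 1 + b = a + b + 1 := by omega
    have e4 : a + 1 - 1 = a := by omega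
    have e7 : b + 1 - 1 = b := by omega
    have e10 : a + b + 2 - 1 = a + b + 1 := by omega
    have e11 : a + b + 1 - 1 = a + b := by omega
    simp only [e1, e5, e8, e4, e7, e10, e11] at hc ⊢
    push_cast at hc ⊢
    linear_combination -hc

theorem rel2 (hs : 2 * s ∈ Γ) (ψ : SV Γ s →ₗ[ℂ] SV Γ s →ₗ[ℂ] ℂ)
    (hψ : IsCocycle Γ s hs ψ) (f : SV Γ s →ₗ[ℂ] ℂ) (hf : IsAssocMap Γ s hs ψ f)
    {α μ : ℂ} (hα : α ∈ Γ) (hμ : μ - s ∈ Γ) (h0 : α + μ = 0) (i j : ℕ) :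
    α * Bv Γ s ψ f α hα μ hμ (i + 1) j + μ * Bv Γ s ψ f α hα μ hμ i (j + 1)
      + ((i : ℂ) + (j : ℂ) - 3 / 2) * Bv Γ s ψ f α hα μ hμ i j = 0 := by
  have hc := hψ.2.2.1 (lgen Γ s 0 (zero_mem Γ) 1) (lgen Γ s α hα i) (ggen Γ s μ hμ j)
    (lgen_homog Γ s _ _) (lgen_homog Γ s _ _) (Or.inl (lgen_even Γ s _ _))
  rw [bkt_LG Γ s hs hα hμ i j, bkt_L0_L Γ s hs 1 hα i, bkt_L0_G Γ s hs 1 hμ j] at hc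
  simp only [map_add, map_smul, LinearMap.add_apply, LinearMap.smul_apply, smul_eq_mul,
    Nat.cast_one] at hc
  rw [psi_L01_G0 Γ s hs ψ f hf (memLG Γ s hα hμ) h0 (i + j),
    psi_L01_G0 Γ s hs ψ f hf (memLG Γ s hα hμ) h0 (i + j - 1)] at hc
  simp only [Bv]
  have a1 : 1 + i - 1 = i := by omega
  have a2 : 1 + j - 1 = j := by omega
  have a3 : 1 + i = i + 1 := by omega
  have a4 : 1 + j = j + 1 := by omega
  have a5 : i + 1 + j = i + j + 1 := by omega
  have a6 : i + (j + 1) = i + j + 1 := by omega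
  have a7 : i + 1 + j - 1 = i + j := by omega
  have a8 : i + (j + 1) - 1 = i + j := by omega
  have a9 : i + 1 - 1 = i := by omega
  have a10 : j + 1 - 1 = j := by omega
  simp only [a1, a2, a3, a4, a5, a6, a7, a8, a9, a10] at hc ⊢
  by_cases hij : i + j = 0
  · obtain ⟨rfl, rfl⟩ : i = 0 ∧ j = 0 := by omega
    simp only [Nat.add_zero, Nat.zero_add, Nat.zero_sub, Nat.cast_zero] at hc ⊢
    linear_combination -hc - (μ - α / 2) * f (ggen Γ s (α + μ) (memLG Γ s hα hμ) 1) * h0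
  · rw [Nat.cast_sub (show 1 ≤ i + j by omega)] at hc
    push_cast at hc ⊢
    linear_combination -hc
      - ((μ - α / 2) * f (ggen Γ s (α + μ) (memLG Γ s hα hμ) (i + j + 1))
        + ((j : ℂ) - (i : ℂ) / 2) * f (ggen Γ s (α + μ) (memLG Γ s hα hμ) (i + j))) * h0

theorem Bv_eq_zero (hs : 2 * s ∈ Γ) (ψ : SV Γ s →ₗ[ℂ] SV Γ s →ₗ[ℂ] ℂ)
    (hψ : IsCocycle Γ s hs ψ) (f : SV Γ s →ₗ[ℂ] ℂ) (hf : IsAssocMap Γ s hs ψ f)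
    {α μ : ℂ} (hα : α ∈ Γ) (hμ : μ - s ∈ Γ) (i j : ℕ) :
    Bv Γ s ψ f α hα μ hμ i j = 0 := by
  by_cases hν : α + μ = 0
  · by_cases hα0 : α = 0
    · have hμ0 : μ = 0 := by linear_combination hν - hα0
      have h2 := rel2 Γ s hs ψ hψ f hf hα hμ hν i j
      have h3 : ((i : ℂ) + (j : ℂ) - 3 / 2) * Bv Γ s ψ f α hα μ hμ i j = 0 := by
        linear_combination h2 - Bv Γ s ψ f α hα μ hμ (i + 1) j * hα0
          - Bv Γ s ψ f α hα μ hμ i (j + 1) * hμ0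
      rcases mul_eq_zero.mp h3 with h | h
      · exact absurd h (n_sub_threehalf_ne i j)
      · exact h
    · -- case α + μ = 0, α ≠ 0
      suffices h : ∀ n, ∀ i j, i + j = n → Bv Γ s ψ f α hα μ hμ i j = 0 from h (i + j) i j rfl
      intro n
      induction n using Nat.strong_induction_on with
      | _ n ih =>
        rcases n with _ | m
        · intro i j hij
          obtain ⟨rfl, rfl⟩ : i = 0 ∧ j = 0 := by omega
          have h1 := rel1 Γ s hs ψ hψ f hf hα hμ 1 0
          simp only [show (1 : ℕ) - 1 = 0 by omega] at h1
          push_cast at h1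
          linear_combination h1 - Bv Γ s ψ f α hα μ hμ 1 0 * hν
        · have sub : ∀ a b, a + b = m →
              Bv Γ s ψ f α hα μ hμ a (b + 1) = 0 ∧ Bv Γ s ψ f α hα μ hμ (a + 1) b = 0 := by
            intro a b hab
            have hBab := ih m (by omega) a b hab
            have h1 := rel1 Γ s hs ψ hψ f hf hα hμ (a + 1) (b + 1)
            simp only [show a + 1 - 1 = a by omega, show b + 1 - 1 = b by omega] at h1
            have h2 := rel2 Γ s hs ψ hψ f hf hα hμ hν a b
            have h4 : α * (Bv Γ s ψ f α hα μ hμ (a + 1) b - Bv Γ s ψ f α hα μ hμ a (b + 1)) = 0 := by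
              linear_combination h2 - Bv Γ s ψ f α hα μ hμ a (b + 1) * hν
                - ((a : ℂ) + (b : ℂ) - 3 / 2) * hBab
            have hXY : Bv Γ s ψ f α hα μ hμ (a + 1) b = Bv Γ s ψ f α hα μ hμ a (b + 1) := by
              rcases mul_eq_zero.mp h4 with h | h
              · exact absurd h hα0
              · linear_combination h
            have h5 : ((a : ℂ) + (b : ℂ) + 2) * Bv Γ s ψ f α hα μ hμ a (b + 1) = 0 := by
              push_cast at h1
              linear_combination h1 - Bv Γ s ψ f α hα μ hμ (a + 1) (b + 1) * hν
                - ((b : ℂ) + 1) * hXY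
            have hY : Bv Γ s ψ f α hα μ hμ a (b + 1) = 0 := by
              rcases mul_eq_zero.mp h5 with h | h
              · exact absurd h (n_add_two_ne a b)
              · exact h
            exact ⟨hY, by rw [hXY, hY]⟩
          intro i j hij
          rcases j with _ | b
          · rcases i with _ | a
            · exact absurd hij (by omega)
            · exact (sub a 0 (by omega)).2
          · exact (sub i b (by omega)).1
  · -- case α + μ ≠ 0
    suffices h : ∀ n, ∀ i j, i + j = n → Bv Γ s ψ f α hα μ hμ i j = 0 from h (i + j) i j rfl
    intro n
    induction n using Nat.strong_induction_on with
    | _ n ih =>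
      intro i j hij
      have h1 := rel1 Γ s hs ψ hψ f hf hα hμ i j
      have hA : (i : ℂ) * Bv Γ s ψ f α hα μ hμ (i - 1) j = 0 := by
        rcases i with _ | a
        · simp
        · rw [show a + 1 - 1 = a by omega, ih (a + j) (by omega) a j rfl, mul_zero]
      have hB : (j : ℂ) * Bv Γ s ψ f α hα μ hμ i (j - 1) = 0 := by
        rcases j with _ | b
        · simp
        · rw [show b + 1 - 1 = b by omega, ih (i + b) (by omega) i b rfl, mul_zero]
      have h3 : (α + μ) * Bv Γ s ψ f α hα μ hμ i j = 0 := by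
        linear_combination h1 - hA - hB
      rcases mul_eq_zero.mp h3 with h | h
      · exact absurd h hν
      · exact h

/-- For a 2-cocycle `ψ` with associated map `f`, the 2-cocycle `φ = ψ - ψ_f`
vanishes on pairs `(L_{α,i}, G_{μ,j})`. -/
theorem cocycle_LG (Γ : AddSubgroup ℂ) (hΓ : ∀ n : ℤ, (n : ℂ) ∈ Γ)
    (s : ℂ) (hs : 2 * s ∈ Γ) :
    ∀ ψ : SV Γ s →ₗ[ℂ] SV Γ s →ₗ[ℂ] ℂ, IsCocycle Γ s hs ψ →
      ∀ f : SV Γ s →ₗ[ℂ] ℂ, IsAssocMap Γ s hs ψ f →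
        ∀ (α : ℂ) (hα : α ∈ Γ) (i : ℕ) (μ : ℂ) (hμ : μ - s ∈ Γ) (j : ℕ),
          ψ (lgen Γ s α hα i) (ggen Γ s μ hμ j)
            - f (bkt Γ s hs (lgen Γ s α hα i) (ggen Γ s μ hμ j)) = 0 := by
  intro ψ hψ f hf α hα i μ hμ j
  have h := Bv_eq_zero Γ s hs ψ hψ f hf hα hμ i j
  rw [bkt_LG Γ s hs hα hμ i j]
  simp only [map_add, map_smul, smul_eq_mul]
  simp only [Bv] at h
  linear_combination h

end SVSuper
end
end

section
/- The bracket on SV = SV[Γ,s] makes SV a Lie superalgebra: it satisfies super skew-symmetry, [x,y] = −(−1)^{|x||y|}[y,x] for all homogeneous x, y ∈ SV, and the super Jacobi identity, [x,[y,z]] = [[x,y],z] + (−1)^{|x||y|}[y,[x,z]] for all homogeneous x, y ∈ SV and all z ∈ SV. -/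
noncomputable section

namespace SVSuper

variable (Γ : AddSubgroup ℂ) (s : ℂ)

/-! ### Generic bilinear extension -/

section Mk2
variable {κ κ' M N : Type*} [AddCommGroup M] [Module ℂ M] [AddCommGroup N] [Module ℂ N]

def mk2L (f : κ → κ' → M) : (κ →₀ ℂ) →ₗ[ℂ] (κ' →₀ ℂ) →ₗ[ℂ] M :=
  Finsupp.lsum ℂ fun a => LinearMap.toSpanSingleton ℂ _
    (Finsupp.lsum ℂ fun b => LinearMap.toSpanSingleton ℂ M (f a b))

lemma mk2L_apply (f : κ → κ' → M) (x : κ →₀ ℂ) (y : κ' →₀ ℂ) :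
    mk2L f x y = x.sum fun a ca => y.sum fun b cb => (ca * cb) • f a b := by
  simp only [mk2L, Finsupp.lsum_apply, Finsupp.sum, LinearMap.sum_apply,
    LinearMap.toSpanSingleton_apply, LinearMap.smul_apply, Finset.smul_sum, smul_smul]

lemma mk2L_single_single (f : κ → κ' → M) (a : κ) (b : κ') (t u : ℂ) :
    mk2L f (Finsupp.single a t) (Finsupp.single b u) = (t * u) • f a b := by
  rw [mk2L_apply, Finsupp.sum_single_index, Finsupp.sum_single_index]
  · simp
  · simp [Finsupp.sum_single_index]

end Mk2

/-! ### The Z-indexed model -/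

abbrev IdxW : Type := (ℂ × ℤ) ⊕ (ℂ × ℤ)
abbrev WSp : Type := IdxW →₀ ℂ

def eL (α : ℂ) (n : ℤ) : WSp := Finsupp.single (Sum.inl (α, n)) 1
def eG (μ : ℂ) (n : ℤ) : WSp := Finsupp.single (Sum.inr (μ, n)) 1

def bkw : IdxW → IdxW → WSp
  | Sum.inl (α, m), Sum.inl (β, n) =>
      (β - α) • eL (α + β) (m + n) + ((n : ℂ) - (m : ℂ)) • eL (α + β) (m + n - 1)
  | Sum.inl (α, m), Sum.inr (μ, n) =>
      (μ - α / 2) • eG (α + μ) (m + n) + ((n : ℂ) - (m : ℂ) / 2) • eG (α + μ) (m + n - 1)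
  | Sum.inr (μ, m), Sum.inl (α, n) =>
      -((μ - α / 2) • eG (α + μ) (n + m) + ((m : ℂ) - (n : ℂ) / 2) • eG (α + μ) (n + m - 1))
  | Sum.inr (μ, m), Sum.inr (ν, n) => (2 : ℂ) • eL (μ + ν) (m + n)

lemma bkw_skew (a b : IdxW) (h : (∃ p, a = Sum.inl p) ∨ (∃ p, b = Sum.inl p)) :
    bkw a b = - bkw b a := by
  obtain (⟨α, m⟩ | ⟨μ, m⟩) := a <;> obtain (⟨β, n⟩ | ⟨ν, n⟩) := b
  · simp only [bkw, eL]; push_cast; ring_nf; try module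
  · simp only [bkw, eG]; push_cast; ring_nf; try module
  · simp only [bkw, eG]
  · exfalso; rcases h with ⟨p, hp⟩ | ⟨p, hp⟩ <;> simp at hp

lemma bkw_symm (p q : ℂ × ℤ) : bkw (Sum.inr p) (Sum.inr q) = bkw (Sum.inr q) (Sum.inr p) := by
  obtain ⟨μ, m⟩ := p; obtain ⟨ν, n⟩ := q
  simp only [bkw, eL]; ring_nf

lemma jacW_plus (a b c : IdxW) (h : (∃ p, a = Sum.inl p) ∨ (∃ p, b = Sum.inl p)) (t u v : ℂ) :
    mk2L bkw (Finsupp.single a t) (mk2L bkw (Finsupp.single b u) (Finsupp.single c v))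
      = mk2L bkw (mk2L bkw (Finsupp.single a t) (Finsupp.single b u)) (Finsupp.single c v)
        + mk2L bkw (Finsupp.single b u) (mk2L bkw (Finsupp.single a t) (Finsupp.single c v)) := by
  have hab : (∃ p q, a = Sum.inl p ∧ b = Sum.inl q) ∨ (∃ p q, a = Sum.inl p ∧ b = Sum.inr q)
      ∨ (∃ p q, a = Sum.inr p ∧ b = Sum.inl q) := by
    rcases h with ⟨p, rfl⟩ | ⟨q, rfl⟩
    · rcases b with q | q
      · exact Or.inl ⟨p, q, rfl, rfl⟩
      · exact Or.inr (Or.inl ⟨p, q, rfl, rfl⟩)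
    · rcases a with p | p
      · exact Or.inl ⟨p, q, rfl, rfl⟩
      · exact Or.inr (Or.inr ⟨p, q, rfl, rfl⟩)
  rcases hab with ⟨⟨α,m⟩,⟨β,n⟩,rfl,rfl⟩ | ⟨⟨α,m⟩,⟨ν,n⟩,rfl,rfl⟩ | ⟨⟨μ,m⟩,⟨β,n⟩,rfl,rfl⟩ <;>
    obtain (⟨γ, k⟩ | ⟨ρ, k⟩) := c <;>
    · simp only [mk2L_single_single, bkw, eL, eG, map_add, map_neg, map_smul, smul_add,
        smul_neg, smul_smul, LinearMap.add_apply, LinearMap.neg_apply, LinearMap.smul_apply]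
      push_cast
      ring_nf
      module

lemma jacW_minus (p q : ℂ × ℤ) (c : IdxW) (t u v : ℂ) :
    mk2L bkw (Finsupp.single (Sum.inr p) t)
        (mk2L bkw (Finsupp.single (Sum.inr q) u) (Finsupp.single c v))
      = mk2L bkw (mk2L bkw (Finsupp.single (Sum.inr p) t) (Finsupp.single (Sum.inr q) u))
          (Finsupp.single c v)
        - mk2L bkw (Finsupp.single (Sum.inr q) u)
            (mk2L bkw (Finsupp.single (Sum.inr p) t) (Finsupp.single c v)) := by
  obtain ⟨μ, m⟩ := p; obtain ⟨ν, n⟩ := q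
  obtain (⟨γ, k⟩ | ⟨ρ, k⟩) := c <;>
  · simp only [mk2L_single_single, bkw, eL, eG, map_add, map_neg, map_smul, smul_add,
      smul_neg, smul_smul, LinearMap.add_apply, LinearMap.neg_apply, LinearMap.smul_apply]
    push_cast
    ring_nf
    module


/-! ### Embedding of `SV` into the Z-indexed model -/

def iotaZ : Idx Γ s → IdxW
  | Sum.inl (p, i) => Sum.inl ((p : ℂ), (i : ℤ))
  | Sum.inr (q, j) => Sum.inr ((q : ℂ), (j : ℤ))

lemma iotaZ_inj : Function.Injective (iotaZ Γ s) := by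
  rintro (⟨⟨α, hα⟩, i⟩ | ⟨⟨μ, hμ⟩, i⟩) (⟨⟨β, hβ⟩, j⟩ | ⟨⟨ν, hν⟩, j⟩) h <;>
    simp only [iotaZ, Sum.inl.injEq, Sum.inr.injEq, Prod.mk.injEq] at h ⊢ <;>
    obtain ⟨h1, h2⟩ := h <;>
    exact ⟨Subtype.ext h1, by exact_mod_cast h2⟩

def phiZ : SV Γ s →ₗ[ℂ] WSp := Finsupp.lmapDomain ℂ ℂ (iotaZ Γ s)

lemma phiZ_single (a : Idx Γ s) (t : ℂ) :
    phiZ Γ s (Finsupp.single a t) = Finsupp.single (iotaZ Γ s a) t := by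
  simp [phiZ, Finsupp.lmapDomain_apply, Finsupp.mapDomain_single]

lemma phiZ_inj : Function.Injective (phiZ Γ s) := by
  intro x y h
  exact Finsupp.mapDomain_injective (iotaZ_inj Γ s)
    (by simpa [phiZ, Finsupp.lmapDomain_apply] using h)

lemma phiZ_bk (hs : 2 * s ∈ Γ) (a b : Idx Γ s) :
    phiZ Γ s (bk Γ s hs a b) = bkw (iotaZ Γ s a) (iotaZ Γ s b) := by
  obtain (⟨⟨α, hα⟩, i⟩ | ⟨⟨μ, hμ⟩, i⟩) := a <;> obtain (⟨⟨β, hβ⟩, j⟩ | ⟨⟨ν, hν⟩, j⟩) := b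
  · simp only [bk, iotaZ, bkw, lgen, eL, map_add, map_smul, phiZ_single]
    by_cases hij : i + j = 0
    · obtain ⟨hi, hj⟩ := Nat.add_eq_zero.mp hij
      subst hi; subst hj; norm_num
    · have h1 : ((i + j - 1 : ℕ) : ℤ) = (i : ℤ) + (j : ℤ) - 1 := by omega
      rw [h1]; push_cast; ring_nf
  · simp only [bk, iotaZ, bkw, ggen, eG, map_add, map_smul, phiZ_single]
    by_cases hij : i + j = 0
    · obtain ⟨hi, hj⟩ := Nat.add_eq_zero.mp hij
      subst hi; subst hj; norm_num
    · have h1 : ((i + j - 1 : ℕ) : ℤ) = (i : ℤ) + (j : ℤ) - 1 := by omega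
      rw [h1]; push_cast; ring_nf
  · simp only [bk, iotaZ, bkw, ggen, eG, map_add, map_neg, map_smul, phiZ_single]
    by_cases hij : j + i = 0
    · obtain ⟨hj, hi⟩ := Nat.add_eq_zero.mp hij
      subst hi; subst hj; norm_num
    · have h1 : ((j + i - 1 : ℕ) : ℤ) = (j : ℤ) + (i : ℤ) - 1 := by omega
      rw [h1]; push_cast; ring_nf
  · simp only [bk, iotaZ, bkw, lgen, eL, map_smul, phiZ_single]
    push_cast; ring_nf

lemma bkt_eq (hs : 2 * s ∈ Γ) (x y : SV Γ s) :
    bkt Γ s hs x y = mk2L (bk Γ s hs) x y :=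
  (mk2L_apply _ x y).symm

lemma phiZ_hom (hs : 2 * s ∈ Γ) (x y : SV Γ s) :
    phiZ Γ s (mk2L (bk Γ s hs) x y) = mk2L bkw (phiZ Γ s x) (phiZ Γ s y) := by
  induction x using Finsupp.induction_linear with
  | zero => simp
  | add f g hf hg => simp only [map_add, LinearMap.add_apply]; rw [hf, hg]
  | single a t =>
    induction y using Finsupp.induction_linear with
    | zero => simp
    | add f g hf hg => simp only [map_add]; rw [hf, hg]
    | single b u =>
      rw [mk2L_single_single, map_smul, phiZ_bk, phiZ_single, phiZ_single, mk2L_single_single]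

/-! ### Parity projections -/

def evenPr : SV Γ s →ₗ[ℂ] SV Γ s := Finsupp.lsum ℂ fun a =>
  match a with
  | Sum.inl p => Finsupp.lsingle (Sum.inl p)
  | Sum.inr _ => 0

def oddPr : SV Γ s →ₗ[ℂ] SV Γ s := Finsupp.lsum ℂ fun a =>
  match a with
  | Sum.inl _ => 0
  | Sum.inr q => Finsupp.lsingle (Sum.inr q)

lemma evenPr_inl (p : Γ × ℕ) (t : ℂ) :
    evenPr Γ s (Finsupp.single (Sum.inl p) t) = Finsupp.single (Sum.inl p) t := by
  simp [evenPr, Finsupp.lsum_single]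

lemma evenPr_inr (q : {μ : ℂ // μ - s ∈ Γ} × ℕ) (t : ℂ) :
    evenPr Γ s (Finsupp.single (Sum.inr q) t) = 0 := by
  simp [evenPr, Finsupp.lsum_single]

lemma oddPr_inl (p : Γ × ℕ) (t : ℂ) :
    oddPr Γ s (Finsupp.single (Sum.inl p) t) = 0 := by
  simp [oddPr, Finsupp.lsum_single]

lemma oddPr_inr (q : {μ : ℂ // μ - s ∈ Γ} × ℕ) (t : ℂ) :
    oddPr Γ s (Finsupp.single (Sum.inr q) t) = Finsupp.single (Sum.inr q) t := by
  simp [oddPr, Finsupp.lsum_single]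

lemma evenPr_of_even (x : SV Γ s) (h : IsEvenElt Γ s x) : evenPr Γ s x = x := by
  have h1 : evenPr Γ s x = x.sum fun a c => evenPr Γ s (Finsupp.single a c) := by
    conv_lhs => rw [← Finsupp.sum_single x]
    exact map_finsuppSum _ _ _
  rw [h1]
  have h2 : (x.sum fun a c => evenPr Γ s (Finsupp.single a c))
      = x.sum fun a c => Finsupp.single a c := by
    apply Finsupp.sum_congr
    intro a ha
    obtain (p | q) := a
    · exact evenPr_inl Γ s p _
    · exact absurd (h q) (Finsupp.mem_support_iff.mp ha)
  rw [h2, Finsupp.sum_single]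

lemma oddPr_of_odd (x : SV Γ s) (h : IsOddElt Γ s x) : oddPr Γ s x = x := by
  have h1 : oddPr Γ s x = x.sum fun a c => oddPr Γ s (Finsupp.single a c) := by
    conv_lhs => rw [← Finsupp.sum_single x]
    exact map_finsuppSum _ _ _
  rw [h1]
  have h2 : (x.sum fun a c => oddPr Γ s (Finsupp.single a c))
      = x.sum fun a c => Finsupp.single a c := by
    apply Finsupp.sum_congr
    intro a ha
    obtain (p | q) := a
    · exact absurd (h p) (Finsupp.mem_support_iff.mp ha)
    · exact oddPr_inr Γ s q _
  rw [h2, Finsupp.sum_single]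

/-! ### Basis-level identities on `SV` -/

lemma bk_skew (hs : 2 * s ∈ Γ) (a b : Idx Γ s)
    (h : (∃ p, a = Sum.inl p) ∨ (∃ p, b = Sum.inl p)) :
    bk Γ s hs a b = - bk Γ s hs b a := by
  apply phiZ_inj Γ s
  rw [map_neg, phiZ_bk, phiZ_bk]
  apply bkw_skew
  rcases h with ⟨⟨p, i⟩, rfl⟩ | ⟨⟨p, i⟩, rfl⟩
  · exact Or.inl ⟨_, rfl⟩
  · exact Or.inr ⟨_, rfl⟩

lemma bk_symm (hs : 2 * s ∈ Γ) (p q : {μ : ℂ // μ - s ∈ Γ} × ℕ) :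
    bk Γ s hs (Sum.inr p) (Sum.inr q) = bk Γ s hs (Sum.inr q) (Sum.inr p) := by
  obtain ⟨p1, p2⟩ := p; obtain ⟨q1, q2⟩ := q
  apply phiZ_inj Γ s
  rw [phiZ_bk, phiZ_bk]
  exact bkw_symm _ _

lemma jac_plus (hs : 2 * s ∈ Γ) (a b c : Idx Γ s)
    (h : (∃ p, a = Sum.inl p) ∨ (∃ p, b = Sum.inl p)) (t u v : ℂ) :
    mk2L (bk Γ s hs) (Finsupp.single a t)
        (mk2L (bk Γ s hs) (Finsupp.single b u) (Finsupp.single c v))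
      = mk2L (bk Γ s hs) (mk2L (bk Γ s hs) (Finsupp.single a t) (Finsupp.single b u))
          (Finsupp.single c v)
        + mk2L (bk Γ s hs) (Finsupp.single b u)
            (mk2L (bk Γ s hs) (Finsupp.single a t) (Finsupp.single c v)) := by
  apply phiZ_inj Γ s
  simp only [map_add, phiZ_hom, phiZ_single]
  apply jacW_plus
  rcases h with ⟨⟨p, i⟩, rfl⟩ | ⟨⟨p, i⟩, rfl⟩
  · exact Or.inl ⟨_, rfl⟩
  · exact Or.inr ⟨_, rfl⟩

lemma jac_minus (hs : 2 * s ∈ Γ) (p q : {μ : ℂ // μ - s ∈ Γ} × ℕ) (c : Idx Γ s) (t u v : ℂ) :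
    mk2L (bk Γ s hs) (Finsupp.single (Sum.inr p) t)
        (mk2L (bk Γ s hs) (Finsupp.single (Sum.inr q) u) (Finsupp.single c v))
      = mk2L (bk Γ s hs)
          (mk2L (bk Γ s hs) (Finsupp.single (Sum.inr p) t) (Finsupp.single (Sum.inr q) u))
          (Finsupp.single c v)
        - mk2L (bk Γ s hs) (Finsupp.single (Sum.inr q) u)
            (mk2L (bk Γ s hs) (Finsupp.single (Sum.inr p) t) (Finsupp.single c v)) := by
  obtain ⟨p1, p2⟩ := p; obtain ⟨q1, q2⟩ := q
  apply phiZ_inj Γ s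
  simp only [map_sub, phiZ_hom, phiZ_single]
  exact jacW_minus _ _ _ t u v

/-! ### Global identities -/

lemma skew_even (hs : 2 * s ∈ Γ) (x y : SV Γ s) :
    mk2L (bk Γ s hs) (evenPr Γ s x) y = - mk2L (bk Γ s hs) y (evenPr Γ s x) := by
  induction x using Finsupp.induction_linear with
  | zero => simp
  | add f g hf hg => simp only [map_add, LinearMap.add_apply]; rw [hf, hg]; abel
  | single a t =>
    induction y using Finsupp.induction_linear with
    | zero => simp
    | add f g hf hg => simp only [map_add, LinearMap.add_apply]; rw [hf, hg]; abel
    | single b u =>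
      obtain (p | q) := a
      · rw [evenPr_inl, mk2L_single_single, mk2L_single_single,
          bk_skew Γ s hs (Sum.inl p) b (Or.inl ⟨p, rfl⟩), smul_neg, mul_comm]
      · simp [evenPr_inr]

lemma symm_odd (hs : 2 * s ∈ Γ) (x y : SV Γ s) :
    mk2L (bk Γ s hs) (oddPr Γ s x) (oddPr Γ s y)
      = mk2L (bk Γ s hs) (oddPr Γ s y) (oddPr Γ s x) := by
  induction x using Finsupp.induction_linear with
  | zero => simp
  | add f g hf hg => simp only [map_add, LinearMap.add_apply]; rw [hf, hg]
  | single a t =>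
    induction y using Finsupp.induction_linear with
    | zero => simp
    | add f g hf hg => simp only [map_add, LinearMap.add_apply]; rw [hf, hg]
    | single b u =>
      obtain (p | q) := a
      · simp [oddPr_inl]
      · obtain (p' | q') := b
        · simp [oddPr_inl]
        · rw [oddPr_inr, oddPr_inr, mk2L_single_single, mk2L_single_single,
            bk_symm Γ s hs q q', mul_comm]

lemma jacE (hs : 2 * s ∈ Γ) (x y z : SV Γ s) :
    mk2L (bk Γ s hs) (evenPr Γ s x) (mk2L (bk Γ s hs) y z)
      = mk2L (bk Γ s hs) (mk2L (bk Γ s hs) (evenPr Γ s x) y) z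
        + mk2L (bk Γ s hs) y (mk2L (bk Γ s hs) (evenPr Γ s x) z) := by
  induction x using Finsupp.induction_linear with
  | zero => simp
  | add f g hf hg => simp only [map_add, LinearMap.add_apply]; rw [hf, hg]; abel
  | single a t =>
    induction y using Finsupp.induction_linear with
    | zero => simp
    | add f g hf hg => simp only [map_add, LinearMap.add_apply]; rw [hf, hg]; abel
    | single b u =>
      induction z using Finsupp.induction_linear with
      | zero => simp
      | add f g hf hg => simp only [map_add, LinearMap.add_apply]; rw [hf, hg]; abel
      | single c v =>
        obtain (p | q) := a
        · rw [evenPr_inl]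
          exact jac_plus Γ s hs _ b c (Or.inl ⟨p, rfl⟩) t u v
        · simp [evenPr_inr]

lemma jacE2 (hs : 2 * s ∈ Γ) (x y z : SV Γ s) :
    mk2L (bk Γ s hs) x (mk2L (bk Γ s hs) (evenPr Γ s y) z)
      = mk2L (bk Γ s hs) (mk2L (bk Γ s hs) x (evenPr Γ s y)) z
        + mk2L (bk Γ s hs) (evenPr Γ s y) (mk2L (bk Γ s hs) x z) := by
  induction x using Finsupp.induction_linear with
  | zero => simp
  | add f g hf hg => simp only [map_add, LinearMap.add_apply]; rw [hf, hg]; abel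
  | single a t =>
    induction y using Finsupp.induction_linear with
    | zero => simp
    | add f g hf hg => simp only [map_add, LinearMap.add_apply]; rw [hf, hg]; abel
    | single b u =>
      induction z using Finsupp.induction_linear with
      | zero => simp
      | add f g hf hg => simp only [map_add, LinearMap.add_apply]; rw [hf, hg]; abel
      | single c v =>
        obtain (p | q) := b
        · rw [evenPr_inl]
          exact jac_plus Γ s hs a _ c (Or.inr ⟨p, rfl⟩) t u v
        · simp [evenPr_inr]

lemma jacO (hs : 2 * s ∈ Γ) (x y z : SV Γ s) :
    mk2L (bk Γ s hs) (oddPr Γ s x) (mk2L (bk Γ s hs) (oddPr Γ s y) z)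
      = mk2L (bk Γ s hs) (mk2L (bk Γ s hs) (oddPr Γ s x) (oddPr Γ s y)) z
        - mk2L (bk Γ s hs) (oddPr Γ s y) (mk2L (bk Γ s hs) (oddPr Γ s x) z) := by
  induction x using Finsupp.induction_linear with
  | zero => simp
  | add f g hf hg =>
      simp only [map_add, LinearMap.add_apply]; rw [hf, hg]; abel
  | single a t =>
    induction y using Finsupp.induction_linear with
    | zero => simp
    | add f g hf hg =>
        simp only [map_add, LinearMap.add_apply]; rw [hf, hg]; abel
    | single b u =>
      induction z using Finsupp.induction_linear with
      | zero => simp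
      | add f g hf hg =>
          simp only [map_add, LinearMap.add_apply]; rw [hf, hg]; abel
      | single c v =>
        obtain (p | q) := a
        · simp [oddPr_inl]
        · obtain (p' | q') := b
          · simp [oddPr_inl]
          · rw [oddPr_inr, oddPr_inr]
            exact jac_minus Γ s hs q q' c t u v

/-- The bracket of `SV[Γ,s]` satisfies super skew-symmetry and the super Jacobi
identity (the sign `(-1)^{|x||y|}` is spelled out according to the parities). -/
theorem SV_is_Lie_superalgebra (Γ : AddSubgroup ℂ) (hΓ : ∀ n : ℤ, (n : ℂ) ∈ Γ)
    (s : ℂ) (hs : 2 * s ∈ Γ) :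
    (∀ x y : SV Γ s, IsHomog Γ s x → IsHomog Γ s y →
      (IsEvenElt Γ s x ∨ IsEvenElt Γ s y) → bkt Γ s hs x y = - bkt Γ s hs y x) ∧
    (∀ x y : SV Γ s, IsOddElt Γ s x → IsOddElt Γ s y →
      bkt Γ s hs x y = bkt Γ s hs y x) ∧
    (∀ x y z : SV Γ s, IsHomog Γ s x → IsHomog Γ s y →
      (IsEvenElt Γ s x ∨ IsEvenElt Γ s y) →
      bkt Γ s hs x (bkt Γ s hs y z)
        = bkt Γ s hs (bkt Γ s hs x y) z + bkt Γ s hs y (bkt Γ s hs x z)) ∧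
    (∀ x y z : SV Γ s, IsOddElt Γ s x → IsOddElt Γ s y →
      bkt Γ s hs x (bkt Γ s hs y z)
        = bkt Γ s hs (bkt Γ s hs x y) z - bkt Γ s hs y (bkt Γ s hs x z)) := by
  refine ⟨?_, ?_, ?_, ?_⟩
  · rintro x y _ _ (hE | hE)
    · have h := skew_even Γ s hs x y
      rw [evenPr_of_even Γ s x hE] at h
      rw [bkt_eq, bkt_eq]; exact h
    · have h := skew_even Γ s hs y x
      rw [evenPr_of_even Γ s y hE] at h
      rw [bkt_eq, bkt_eq, h, neg_neg]
  · intro x y hx hy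
    have h := symm_odd Γ s hs x y
    rw [oddPr_of_odd Γ s x hx, oddPr_of_odd Γ s y hy] at h
    rw [bkt_eq, bkt_eq]; exact h
  · rintro x y z _ _ (hE | hE)
    · have h := jacE Γ s hs x y z
      rw [evenPr_of_even Γ s x hE] at h
      simp only [bkt_eq]; exact h
    · have h := jacE2 Γ s hs x y z
      rw [evenPr_of_even Γ s y hE] at h
      simp only [bkt_eq]; exact h
  · intro x y z hx hy
    have h := jacO Γ s hs x y z
    rw [oddPr_of_odd Γ s x hx, oddPr_of_odd Γ s y hy] at h
    simp only [bkt_eq]; exact h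

end SVSuper
end
end
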